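/- Let α > 0, let 1 ≤ a < x be fixed reals, and let f : [a,x] → ℝ be continuous. Then as ρ → 0⁺, the generalized fractional integral with parameters β = α, κ = 0, η = 0, namely (ρ^(1−α)/Γ(α)) ∫_a^x t^(ρ−1) (x^ρ − t^ρ)^(α−1) f(t) dt, converges to the Hadamard fractional integral (1/Γ(α)) ∫_a^x (log(x/t))^(α−1) f(t)/t dt. -/

import Mathlib

open MeasureTheory Filter Set intervalIntegral

/-- As ρ → 0⁺, the generalized (Katugampola-type) fractional integral with
β = α, κ = 0, η = 0 converges to the Hadamard fractional integral. -/
theorem katugampola_tendsto_hadamard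
    (α a x : ℝ) (hα : 0 < α) (ha : 1 ≤ a) (hax : a < x)
    (f : ℝ → ℝ) (hf : ContinuousOn f (Set.Icc a x)) :
    Tendsto
      (fun ρ : ℝ => (ρ ^ (1 - α) / Real.Gamma α) *
        ∫ t in a..x, t ^ (ρ - 1) * (x ^ ρ - t ^ ρ) ^ (α - 1) * f t)
      (nhdsWithin 0 (Set.Ioi 0))
      (nhds ((1 / Real.Gamma α) *
        ∫ t in a..x, (Real.log (x / t)) ^ (α - 1) * (f t / t))) := by
  have hx1 : (1:ℝ) < x := lt_of_le_of_lt ha hax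
  have hx0 : (0:ℝ) < x := by linarith
  -- bound on f
  obtain ⟨M, hM⟩ := (isCompact_Icc (a := a) (b := x)).exists_bound_of_continuousOn hf
  have hM0 : 0 ≤ M := le_trans (norm_nonneg _) (hM a ⟨le_refl a, hax.le⟩)
  -- key integral inequalities
  have key : ∀ ρ ∈ Set.Ioc (0:ℝ) 1, ∀ t ∈ Set.Icc a x,
      Real.log (x / t) ≤ (x ^ ρ - t ^ ρ) / ρ ∧ (x ^ ρ - t ^ ρ) / ρ ≤ x - t := by
    rintro ρ ⟨hρ0, hρ1⟩ t ⟨hat, htx⟩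
    have ht1 : 1 ≤ t := le_trans ha hat
    have ht0 : (0:ℝ) < t := by linarith
    have hint : (∫ s in t..x, s ^ (ρ - 1)) = (x ^ ρ - t ^ ρ) / ρ := by
      rw [integral_rpow (Or.inl (by linarith))]
      norm_num
    constructor
    · have h1 : (∫ s in t..x, s⁻¹) ≤ ∫ s in t..x, s ^ (ρ - 1) := by
        apply intervalIntegral.integral_mono_on htx
        · exact (continuousOn_id.inv₀ (fun s hs => by
            rw [Set.uIcc_of_le htx] at hs
            have : (1:ℝ) ≤ s := le_trans ht1 hs.1
            exact (by linarith : (0:ℝ) < s).ne')).intervalIntegrable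
        · exact intervalIntegrable_rpow' (by linarith)
        · intro s hs
          rcases hs with ⟨hs1, hs2⟩
          have hs1' : (1:ℝ) ≤ s := le_trans ht1 hs1
          calc s⁻¹ = s ^ (-1 : ℝ) := (Real.rpow_neg_one s).symm
          _ ≤ s ^ (ρ - 1) := Real.rpow_le_rpow_of_exponent_le hs1' (by linarith)
      rwa [integral_inv (Set.notMem_uIcc_of_lt ht0 hx0), hint] at h1
    · have h2 : (∫ s in t..x, s ^ (ρ - 1)) ≤ ∫ s in t..x, (1:ℝ) := by
        apply intervalIntegral.integral_mono_on htx
        · exact intervalIntegrable_rpow' (by linarith)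
        · exact intervalIntegrable_const
        · intro s hs
          rcases hs with ⟨hs1, hs2⟩
          exact Real.rpow_le_one_of_one_le_of_nonpos (le_trans ht1 hs1) (by linarith)
      rwa [integral_one, hint] at h2
  -- a.e. t ≠ x
  have hxne : ∀ᵐ t : ℝ ∂volume, t ≠ x := by
    rw [ae_iff]
    simp only [ne_eq, not_not, Set.setOf_eq_eq_singleton]
    exact Real.volume_singleton
  -- measurability
  have hmeas : ∀ᶠ ρ in nhdsWithin (0:ℝ) (Set.Ioi 0),
      AEStronglyMeasurable (fun t => t ^ (ρ - 1) * ((x ^ ρ - t ^ ρ) / ρ) ^ (α - 1) * f t)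
        (volume.restrict (Set.uIoc a x)) := by
    apply Eventually.of_forall
    intro ρ
    have hf' : AEStronglyMeasurable f (volume.restrict (Set.uIoc a x)) := by
      rw [Set.uIoc_of_le hax.le]
      exact (hf.mono Set.Ioc_subset_Icc_self).aestronglyMeasurable measurableSet_Ioc
    have hm : Measurable fun t : ℝ => t ^ (ρ - 1) * ((x ^ ρ - t ^ ρ) / ρ) ^ (α - 1) := by
      fun_prop
    exact (hm.aestronglyMeasurable.restrict).mul hf'
  -- pointwise limit
  have hlim : ∀ᵐ t : ℝ ∂volume, t ∈ Set.uIoc a x →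
      Tendsto (fun ρ : ℝ => t ^ (ρ - 1) * ((x ^ ρ - t ^ ρ) / ρ) ^ (α - 1) * f t)
        (nhdsWithin 0 (Set.Ioi 0)) (nhds ((Real.log (x / t)) ^ (α - 1) * (f t / t))) := by
    filter_upwards [hxne] with t htne hmem
    rw [Set.uIoc_of_le hax.le] at hmem
    have hta : a < t := hmem.1
    have htx : t < x := lt_of_le_of_ne hmem.2 htne
    have ht1 : (1:ℝ) ≤ t := le_trans ha hta.le
    have ht0 : (0:ℝ) < t := by linarith
    have hL : 0 < Real.log (x / t) := Real.log_pos ((one_lt_div ht0).mpr htx)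
    have h1 : Tendsto (fun ρ : ℝ => t ^ (ρ - 1)) (nhdsWithin 0 (Set.Ioi 0)) (nhds t⁻¹) := by
      have hc : ContinuousAt (fun y : ℝ => t ^ y) ((0:ℝ) - 1) :=
        Real.continuousAt_const_rpow ht0.ne'
      have hsub : Tendsto (fun ρ : ℝ => ρ - 1) (nhdsWithin 0 (Set.Ioi 0)) (nhds ((0:ℝ) - 1)) :=
        ((continuous_id.sub continuous_const).tendsto 0).mono_left nhdsWithin_le_nhds
      have := hc.tendsto.comp hsub
      simpa [Function.comp_def, Real.rpow_neg_one] using this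
    have h2 : Tendsto (fun ρ : ℝ => (x ^ ρ - t ^ ρ) / ρ) (nhdsWithin 0 (Set.Ioi 0))
        (nhds (Real.log (x / t))) := by
      have hg : HasDerivAt (fun ρ : ℝ => x ^ ρ - t ^ ρ) (Real.log (x / t)) 0 := by
        have hx' : HasDerivAt (fun ρ : ℝ => x ^ ρ) (Real.log x) 0 := by
          have : (fun ρ : ℝ => x ^ ρ) = fun ρ => Real.exp (Real.log x * ρ) :=
            funext fun ρ => Real.rpow_def_of_pos hx0 ρ
          rw [this]
          simpa using ((hasDerivAt_id (0:ℝ)).const_mul (Real.log x)).exp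
        have ht' : HasDerivAt (fun ρ : ℝ => t ^ ρ) (Real.log t) 0 := by
          have : (fun ρ : ℝ => t ^ ρ) = fun ρ => Real.exp (Real.log t * ρ) :=
            funext fun ρ => Real.rpow_def_of_pos ht0 ρ
          rw [this]
          simpa using ((hasDerivAt_id (0:ℝ)).const_mul (Real.log t)).exp
        simpa [Pi.sub_def, Real.log_div hx0.ne' ht0.ne'] using hx'.sub ht'
      have hs := hasDerivAt_iff_tendsto_slope.mp hg
      have hmono : nhdsWithin (0:ℝ) (Set.Ioi 0) ≤ nhdsWithin 0 {(0:ℝ)}ᶜ :=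
        nhdsWithin_mono 0 (fun ρ hρ => ne_of_gt hρ)
      refine (hs.mono_left hmono).congr fun ρ => ?_
      simp [slope_def_field, Real.rpow_zero]
    have h3 : Tendsto (fun ρ : ℝ => ((x ^ ρ - t ^ ρ) / ρ) ^ (α - 1))
        (nhdsWithin 0 (Set.Ioi 0)) (nhds ((Real.log (x / t)) ^ (α - 1))) :=
      ((Real.continuousAt_rpow_const _ _ (Or.inl hL.ne')).tendsto.comp h2)
    have h4 := (h1.mul h3).mul (tendsto_const_nhds (x := f t))
    have : (Real.log (x / t)) ^ (α - 1) * (f t / t) =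
        t⁻¹ * (Real.log (x / t)) ^ (α - 1) * f t := by
      ring
    rw [this]
    exact h4
  -- reduction of the expression
  have heq : ∀ᶠ ρ in nhdsWithin (0:ℝ) (Set.Ioi 0),
      (1 / Real.Gamma α) * ∫ t in a..x, t ^ (ρ - 1) * ((x ^ ρ - t ^ ρ) / ρ) ^ (α - 1) * f t
      = (ρ ^ (1 - α) / Real.Gamma α) *
          ∫ t in a..x, t ^ (ρ - 1) * (x ^ ρ - t ^ ρ) ^ (α - 1) * f t := by
    filter_upwards [self_mem_nhdsWithin] with ρ hρ
    have hρ0 : (0:ℝ) < ρ := hρ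
    have hcongr : (∫ t in a..x, t ^ (ρ - 1) * ((x ^ ρ - t ^ ρ) / ρ) ^ (α - 1) * f t)
        = ∫ t in a..x, ρ ^ (1 - α) * (t ^ (ρ - 1) * (x ^ ρ - t ^ ρ) ^ (α - 1) * f t) := by
      apply intervalIntegral.integral_congr
      intro t ht
      dsimp only
      rw [Set.uIcc_of_le hax.le] at ht
      have ht0 : (0:ℝ) < t := by have := ht.1; linarith
      have hnn : 0 ≤ x ^ ρ - t ^ ρ :=
        sub_nonneg.mpr (Real.rpow_le_rpow ht0.le ht.2 hρ0.le)
      have : ((x ^ ρ - t ^ ρ) / ρ) ^ (α - 1)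
          = (x ^ ρ - t ^ ρ) ^ (α - 1) * ρ ^ (1 - α) := by
        rw [Real.div_rpow hnn hρ0.le, div_eq_mul_inv, ← Real.rpow_neg hρ0.le,
          (by ring : -(α - 1) = 1 - α)]
      rw [this]; ring
    rw [hcongr, intervalIntegral.integral_const_mul]
    ring
  -- main convergence via dominated convergence
  have main : Tendsto
      (fun ρ : ℝ => ∫ t in a..x, t ^ (ρ - 1) * ((x ^ ρ - t ^ ρ) / ρ) ^ (α - 1) * f t)
      (nhdsWithin 0 (Set.Ioi 0))
      (nhds (∫ t in a..x, (Real.log (x / t)) ^ (α - 1) * (f t / t))) := by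
    rcases le_or_gt α 1 with hα1 | hα1
    · -- bound : M * x^(1-α) * (x-t)^(α-1)
      refine intervalIntegral.tendsto_integral_filter_of_dominated_convergence
        (fun t => M * x ^ (1 - α) * (x - t) ^ (α - 1)) hmeas ?_ ?_ hlim
      · filter_upwards [Ioc_mem_nhdsGT (by norm_num : (0:ℝ) < 1)] with ρ hρ
        filter_upwards [hxne] with t htne hmem
        rw [Set.uIoc_of_le hax.le] at hmem
        have hta : a < t := hmem.1
        have htx : t < x := lt_of_le_of_ne hmem.2 htne
        have ht1 : (1:ℝ) ≤ t := le_trans ha hta.le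
        have ht0 : (0:ℝ) < t := by linarith
        obtain ⟨hk1, hk2⟩ := key ρ hρ t ⟨hta.le, htx.le⟩
        have hL : 0 < Real.log (x / t) := Real.log_pos ((one_lt_div ht0).mpr htx)
        have hlb : (x - t) / x ≤ Real.log (x / t) := by
          have h5 := Real.one_sub_inv_le_log_of_pos (div_pos hx0 ht0)
          rw [inv_div] at h5
          have hxx : (x - t) / x = 1 - t / x := by field_simp
          linarith
        have hlb' : 0 < (x - t) / x := div_pos (by linarith) hx0
        have hA : t ^ (ρ - 1) ≤ 1 :=
          Real.rpow_le_one_of_one_le_of_nonpos ht1 (by linarith [hρ.2])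
        have hB : ((x ^ ρ - t ^ ρ) / ρ) ^ (α - 1) ≤ x ^ (1 - α) * (x - t) ^ (α - 1) := by
          calc ((x ^ ρ - t ^ ρ) / ρ) ^ (α - 1)
              ≤ (Real.log (x / t)) ^ (α - 1) :=
                Real.rpow_le_rpow_of_nonpos hL hk1 (by linarith)
            _ ≤ ((x - t) / x) ^ (α - 1) :=
                Real.rpow_le_rpow_of_nonpos hlb' hlb (by linarith)
            _ = x ^ (1 - α) * (x - t) ^ (α - 1) := by
                rw [Real.div_rpow (by linarith) hx0.le, div_eq_mul_inv,
                  ← Real.rpow_neg hx0.le, (by ring : -(α - 1) = 1 - α)]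
                ring
        have hfM : |f t| ≤ M := hM t ⟨hta.le, htx.le⟩
        have hAnn : 0 ≤ t ^ (ρ - 1) := Real.rpow_nonneg ht0.le _
        have hBnn : 0 ≤ ((x ^ ρ - t ^ ρ) / ρ) ^ (α - 1) :=
          Real.rpow_nonneg (le_trans hL.le hk1) _
        have hCnn : 0 ≤ x ^ (1 - α) * (x - t) ^ (α - 1) :=
          mul_nonneg (Real.rpow_nonneg hx0.le _) (Real.rpow_nonneg (by linarith) _)
        calc ‖t ^ (ρ - 1) * ((x ^ ρ - t ^ ρ) / ρ) ^ (α - 1) * f t‖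
            = t ^ (ρ - 1) * ((x ^ ρ - t ^ ρ) / ρ) ^ (α - 1) * |f t| := by
              rw [Real.norm_eq_abs, abs_mul, abs_mul, abs_of_nonneg hAnn, abs_of_nonneg hBnn]
          _ ≤ 1 * (x ^ (1 - α) * (x - t) ^ (α - 1)) * M :=
              mul_le_mul (mul_le_mul hA hB hBnn zero_le_one) hfM (abs_nonneg _)
                (by rw [one_mul]; exact hCnn)
          _ = M * x ^ (1 - α) * (x - t) ^ (α - 1) := by ring
      · have hg : IntervalIntegrable (fun t : ℝ => (x - t) ^ (α - 1)) volume a x := by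
          have := (intervalIntegrable_rpow' (a := x - a) (b := 0)
            (by linarith : (-1:ℝ) < α - 1)).comp_sub_left x
          simpa using this
        simpa [mul_assoc] using hg.const_mul (M * x ^ (1 - α))
    · -- bound : constant M * (x-a)^(α-1)
      refine intervalIntegral.tendsto_integral_filter_of_dominated_convergence
        (fun _ => M * (x - a) ^ (α - 1)) hmeas ?_ (by apply _root_.intervalIntegrable_const) hlim
      · filter_upwards [Ioc_mem_nhdsGT (by norm_num : (0:ℝ) < 1)] with ρ hρ
        filter_upwards [hxne] with t htne hmem
        rw [Set.uIoc_of_le hax.le] at hmem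
        have hta : a < t := hmem.1
        have htx : t < x := lt_of_le_of_ne hmem.2 htne
        have ht1 : (1:ℝ) ≤ t := le_trans ha hta.le
        have ht0 : (0:ℝ) < t := by linarith
        obtain ⟨hk1, hk2⟩ := key ρ hρ t ⟨hta.le, htx.le⟩
        have hL : 0 < Real.log (x / t) := Real.log_pos ((one_lt_div ht0).mpr htx)
        have hA : t ^ (ρ - 1) ≤ 1 :=
          Real.rpow_le_one_of_one_le_of_nonpos ht1 (by linarith [hρ.2])
        have hB : ((x ^ ρ - t ^ ρ) / ρ) ^ (α - 1) ≤ (x - a) ^ (α - 1) := by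
          calc ((x ^ ρ - t ^ ρ) / ρ) ^ (α - 1)
              ≤ (x - t) ^ (α - 1) :=
                Real.rpow_le_rpow (by linarith) hk2 (by linarith)
            _ ≤ (x - a) ^ (α - 1) :=
                Real.rpow_le_rpow (by linarith) (by linarith) (by linarith)
        have hfM : |f t| ≤ M := hM t ⟨hta.le, htx.le⟩
        have hAnn : 0 ≤ t ^ (ρ - 1) := Real.rpow_nonneg ht0.le _
        have hBnn : 0 ≤ ((x ^ ρ - t ^ ρ) / ρ) ^ (α - 1) :=
          Real.rpow_nonneg (le_trans hL.le hk1) _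
        have hCnn : 0 ≤ (x - a) ^ (α - 1) := Real.rpow_nonneg (by linarith) _
        calc ‖t ^ (ρ - 1) * ((x ^ ρ - t ^ ρ) / ρ) ^ (α - 1) * f t‖
            = t ^ (ρ - 1) * ((x ^ ρ - t ^ ρ) / ρ) ^ (α - 1) * |f t| := by
              rw [Real.norm_eq_abs, abs_mul, abs_mul, abs_of_nonneg hAnn, abs_of_nonneg hBnn]
          _ ≤ 1 * ((x - a) ^ (α - 1)) * M :=
              mul_le_mul (mul_le_mul hA hB hBnn zero_le_one) hfM (abs_nonneg _)
                (by rw [one_mul]; exact hCnn)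
          _ = M * (x - a) ^ (α - 1) := by ring
  exact ((main.const_mul (1 / Real.Gamma α)).congr' heq)
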